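/- Let 𝒢 : ℝⁿ → ℝ be continuous, bounded and integrable with 𝒢(0) ≠ 0, and let g(x) = A x + b be an invertible affine map of ℝⁿ. Then the following are equivalent: (i) (𝒢 ⋆ I)(g x) = (𝒢 ⋆ (I ∘ g))(x) for every integrable I : ℝⁿ → ℝ and every x ∈ ℝⁿ; (ii) 𝒢(A v) = |det A|⁻¹ 𝒢(v) for every v ∈ ℝⁿ; (iii) the quantization kernel is invariant under the linear part, 𝒢 ∘ A = 𝒢, and the map is volume preserving, |det A| = 1. -/

import Mathlib

open MeasureTheory

/-- For a continuous, bounded, integrable kernel `G` with `G 0 ≠ 0` and an invertible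
affine map `x ↦ A x + b`: commutation with quantization on all integrable images is
equivalent to `G (A v) = |det A|⁻¹ G v` for all `v`, which is in turn equivalent to
`G ∘ A = G` together with `|det A| = 1`. -/
theorem stmt_4 (n : ℕ) (G : EuclideanSpace ℝ (Fin n) → ℝ)
    (hcont : Continuous G) (hbdd : ∃ C : ℝ, ∀ x, |G x| ≤ C)
    (hint : Integrable G) (h0 : G 0 ≠ 0)
    (A : EuclideanSpace ℝ (Fin n) →ₗ[ℝ] EuclideanSpace ℝ (Fin n))
    (hA : Function.Bijective ⇑A) (b : EuclideanSpace ℝ (Fin n)) :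
    ((∀ I : EuclideanSpace ℝ (Fin n) → ℝ, Integrable I →
        ∀ x, (∫ y, G (A x + b - y) * I y) = ∫ y, G (x - y) * I (A y + b)) ↔
      ∀ v, G (A v) = |LinearMap.det A|⁻¹ * G v) ∧
    ((∀ v, G (A v) = |LinearMap.det A|⁻¹ * G v) ↔
      ((∀ v, G (A v) = G v) ∧ |LinearMap.det A| = 1)) := by
  classical
  obtain ⟨C, hC⟩ := hbdd
  let L : EuclideanSpace ℝ (Fin n) ≃ₗ[ℝ] EuclideanSpace ℝ (Fin n) := LinearEquiv.ofBijective A hA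
  have hdet : LinearMap.det A ≠ 0 := by
    have := L.isUnit_det'
    have hLA : (L : EuclideanSpace ℝ (Fin n) →ₗ[ℝ] EuclideanSpace ℝ (Fin n)) = A := by
      ext x; rfl
    rw [hLA] at this
    exact this.ne_zero
  set c : ℝ := |LinearMap.det A|⁻¹ with hc_def
  have hc_pos : 0 < c := by positivity
  -- part 2
  have part2 : (∀ v, G (A v) = c * G v) ↔ ((∀ v, G (A v) = G v) ∧ |LinearMap.det A| = 1) := by
    constructor
    · intro h
      have h00 := h 0
      rw [map_zero] at h00
      have hc1 : c = 1 := by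
        have : c * G 0 = 1 * G 0 := by rw [one_mul, ← h00]
        exact mul_right_cancel₀ h0 this
      have hd1 : |LinearMap.det A| = 1 := by
        rw [hc_def] at hc1; rwa [inv_eq_one] at hc1
      exact ⟨fun v => by rw [h v, hc1, one_mul], hd1⟩
    · rintro ⟨h1, h2⟩ v
      rw [hc_def, h2, inv_one, one_mul]; exact h1 v
  -- the measurable equivalence y ↦ A y + b
  let Lc : EuclideanSpace ℝ (Fin n) ≃L[ℝ] EuclideanSpace ℝ (Fin n) := L.toContinuousLinearEquiv
  let eH : EuclideanSpace ℝ (Fin n) ≃ₜ EuclideanSpace ℝ (Fin n) := Lc.toHomeomorph.trans (Homeomorph.addRight b)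
  let e : EuclideanSpace ℝ (Fin n) ≃ᵐ EuclideanSpace ℝ (Fin n) := eH.toMeasurableEquiv
  have he : ∀ y, e y = A y + b := fun y => rfl
  have hesc : Continuous (⇑e.symm) := eH.symm.continuous
  have he0 : e.symm b = 0 := by
    have h1 : e 0 = b := by rw [he]; simp
    rw [← h1, e.symm_apply_apply]
  -- pushforward of volume under e
  have hmap : Measure.map (⇑e) (volume : Measure (EuclideanSpace ℝ (Fin n))) = ENNReal.ofReal c • volume := by
    have h1 : Measure.map (⇑A) (volume : Measure (EuclideanSpace ℝ (Fin n))) = ENNReal.ofReal c • volume := by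
      have := Measure.map_linearMap_addHaar_eq_smul_addHaar (volume : Measure (EuclideanSpace ℝ (Fin n))) hdet
      rwa [abs_inv] at this
    have h2 : (⇑e : EuclideanSpace ℝ (Fin n) → EuclideanSpace ℝ (Fin n)) = (fun z => z + b) ∘ ⇑A := rfl
    rw [h2, ← Measure.map_map (measurable_add_const b)
      (A.continuous_of_finiteDimensional.measurable), h1, Measure.map_smul,
      (measurePreserving_add_right (volume : Measure (EuclideanSpace ℝ (Fin n))) b).map_eq]
  -- change of variables
  have key : ∀ f : EuclideanSpace ℝ (Fin n) → ℝ, (∫ y, f (A y + b)) = c * ∫ z, f z := by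
    intro f
    have h1 := MeasureTheory.integral_map_equiv (μ := (volume : Measure (EuclideanSpace ℝ (Fin n)))) e f
    rw [hmap, integral_smul_measure, ENNReal.toReal_ofReal hc_pos.le, smul_eq_mul] at h1
    exact h1.symm
  have keyInt : ∀ f : EuclideanSpace ℝ (Fin n) → ℝ, Integrable (fun y => f (A y + b)) → Integrable f := by
    intro f hf
    have h1 : Integrable f (Measure.map (⇑e) volume) :=
      (MeasureTheory.integrable_map_equiv e f).2 hf
    rw [hmap] at h1
    exact (integrable_smul_measure (by simp only [ne_eq, ENNReal.ofReal_eq_zero, not_le]; exact hc_pos) ENNReal.ofReal_ne_top).1 h1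
  constructor
  · constructor
    · -- commutation ⇒ kernel relation
      intro hcomm v
      have g1int : Integrable (fun y => G (A v + b - y)) := hint.comp_sub_left (A v + b)
      have g2int : Integrable (fun z => G (v - e.symm z)) := by
        apply keyInt
        have hfun : (fun y => G (v - e.symm (A y + b))) = fun y => G (v - y) := by
          funext y
          rw [show A y + b = e y from (he y).symm, e.symm_apply_apply]
        rw [hfun]
        exact hint.comp_sub_left v
      set H : EuclideanSpace ℝ (Fin n) → ℝ := fun z => G (A v + b - z) - c * G (v - e.symm z) with hH_def
      have Hint : Integrable H := g1int.sub (g2int.const_mul c)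
      have hzero : ∀ s : Set (EuclideanSpace ℝ (Fin n)), MeasurableSet s → volume s < ⊤ → ∫ z in s, H z = 0 := by
        intro s hs hsfin
        set I : EuclideanSpace ℝ (Fin n) → ℝ := s.indicator fun _ => (1 : ℝ) with hI_def
        have hIint : Integrable I :=
          (integrable_indicator_iff hs).2 (integrableOn_const hsfin.ne)
        have heq := hcomm I hIint v
        -- LHS
        have hL : (fun y => G (A v + b - y) * I y) = s.indicator fun y => G (A v + b - y) := by
          funext y
          by_cases hy : y ∈ s <;> simp [hI_def, Set.indicator_of_mem, Set.indicator_of_notMem, hy]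
        -- RHS
        set f : EuclideanSpace ℝ (Fin n) → ℝ := fun z => G (v - e.symm z) * I z with hf_def
        have hfe : (fun y => G (v - y) * I (A y + b)) = fun y => f (A y + b) := by
          funext y
          have h1 : A y + b = e y := (he y).symm
          rw [h1, hf_def]
          simp only [e.symm_apply_apply]
        have hfind : f = s.indicator fun z => G (v - e.symm z) := by
          funext z
          by_cases hz : z ∈ s <;> simp [hf_def, hI_def, Set.indicator_of_mem,
            Set.indicator_of_notMem, hz]
        rw [hL, integral_indicator hs, hfe, key f, hfind, integral_indicator hs] at heq
        have h2 : IntegrableOn (fun z => G (A v + b - z)) s := g1int.integrableOn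
        have h3 : IntegrableOn (fun z => c * G (v - e.symm z)) s :=
          (g2int.const_mul c).integrableOn
        rw [hH_def]
        rw [integral_sub h2 h3, integral_const_mul]
        rw [heq]
        ring
      have Hae : H =ᵐ[volume] 0 :=
        ae_eq_zero_of_forall_setIntegral_eq_of_sigmaFinite
          (fun s _ _ => Hint.integrableOn) hzero
      have Hcont : Continuous H := by
        apply Continuous.sub
        · exact hcont.comp (continuous_const.sub continuous_id)
        · exact continuous_const.mul (hcont.comp (continuous_const.sub hesc))
      have Hzero : H = 0 := (Hcont.ae_eq_iff_eq volume continuous_const).1 Hae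
      have hb := congrFun Hzero b
      rw [hH_def] at hb
      simp only [he0, sub_zero, add_sub_cancel_right, Pi.zero_apply] at hb
      linarith
    · -- kernel relation ⇒ commutation
      intro hG I hI x
      obtain ⟨hGA, hd1⟩ := part2.1 hG
      have hc1 : c = 1 := by rw [hc_def, hd1, inv_one]
      set f : EuclideanSpace ℝ (Fin n) → ℝ := fun z => G (x - e.symm z) * I z with hf_def
      have hfe : (fun y => G (x - y) * I (A y + b)) = fun y => f (A y + b) := by
        funext y
        have h1 : A y + b = e y := (he y).symm
        rw [h1, hf_def]
        simp only [e.symm_apply_apply]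
      rw [hfe, key f, hc1, one_mul]
      refine integral_congr_ae (Filter.Eventually.of_forall fun z => ?_)
      have h2 : A x + b - z = A (x - e.symm z) := by
        have h3 : A (e.symm z) = z - b := by
          have h4 : e (e.symm z) = z := e.apply_symm_apply z
          rw [he] at h4
          exact eq_sub_of_add_eq h4
        rw [map_sub, h3]
        abel
      show G (A x + b - z) * I z = G (x - e.symm z) * I z
      rw [h2, hGA]
  · exact part2
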